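/- Fix an integer k ≥ 2 and p ∈ (0, 1/2]. For every index i ∈ {1,…,k}, marginalizing out the i-th bit of the distribution P_k yields k−1 independent p-biased bits: for every y ∈ {0,1}^{k−1}, writing m' for the number of ones in y, the sum over b ∈ {0,1} of P_k applied to the string obtained from y by inserting b at position i equals p^{m'} (1−p)^{(k−1)−m'}. -/
import Mathlib


open Finset

/-- The number of ones in a bit string. -/
def ones {k : ℕ} (x : Fin k → Bool) : ℕ := (Finset.univ.filter fun i => x i = true).card

lemma ones_eq_sum {k : ℕ} (x : Fin k → Bool) :
    ones x = ∑ j, if x j = true then 1 else 0 := by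
  rw [ones, Finset.card_filter]

lemma ones_insertNth {k : ℕ} (i : Fin (k + 1)) (b : Bool) (y : Fin k → Bool) :
    ones (i.insertNth b y) = (if b then 1 else 0) + ones y := by
  simp [ones_eq_sum, Fin.sum_univ_succAbove _ i]

lemma ones_le {k : ℕ} (y : Fin k → Bool) : ones y ≤ k := by
  have h := Finset.card_filter_le (Finset.univ : Finset (Fin k)) (fun i => y i = true)
  simpa [ones] using h

/-- The planted per-coordinate distribution
`P_k(x) = p^m (1-p)^{k-m} - (-1)^{k-m} p^k`, where `m` is the number of ones in `x`. -/
noncomputable def Pk (k : ℕ) (p : ℝ) (x : Fin k → Bool) : ℝ :=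
  p ^ ones x * (1 - p) ^ (k - ones x) - (-1 : ℝ) ^ (k - ones x) * p ^ k

/-- (with strings of length `k + 1 ≥ 2` playing the role of the length-`k`
strings of the paper) For every position `i`, marginalizing out the `i`-th bit of the
distribution `P_{k+1}` yields `k` independent `p`-biased bits: for every
`y ∈ {0,1}^k` with `m'` ones, `∑ b ∈ {0,1}, P_{k+1}(insert b at position i into y)`
equals `p^{m'} (1-p)^{k-m'}`. -/
theorem stmt8 (k : ℕ) (hk : 1 ≤ k) (p : ℝ) (hp0 : 0 < p) (hp2 : p ≤ 1 / 2)
    (i : Fin (k + 1)) (y : Fin k → Bool) :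
    (∑ b : Bool, Pk (k + 1) p (i.insertNth b y))
      = p ^ ones y * (1 - p) ^ (k - ones y) := by
  have hm := ones_le y
  rw [Fintype.sum_bool]
  simp only [Pk, ones_insertNth]
  norm_num
  have h1 : k + 1 - (1 + ones y) = k - ones y := by omega
  have h2 : k + 1 - ones y = (k - ones y) + 1 := by omega
  rw [h1, h2, pow_succ, pow_succ, pow_succ]
  ring
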